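/- Let n ≥ 2 be an integer. If λ ∈ ℝ is a root of F_n with λ > (1/2)·f_1(n), where f_1(n) = n(n−1)(n+1)(n+2)/8, then F_{n+1}(λ) < 0. -/

import Mathlib

noncomputable def Fpoly (n : ℕ) (x : ℝ) : ℝ :=
  ∑ j ∈ Finset.range (n / 2 + 1),
    (-4 : ℝ) ^ ((j : ℤ) - ((n / 2 : ℕ) : ℤ)) *
      ((ascPochhammer ℝ n).eval (2 * ((n / 2 : ℕ) : ℝ) - 2 * (j : ℝ) + 1) /
        (Nat.factorial (n - (2 * (n / 2) - 2 * j)) : ℝ)) * x ^ j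

noncomputable def cC (n k : ℕ) : ℝ :=
  (Nat.factorial (n + 2*k) : ℝ) /
    ((Nat.factorial (n - 2*k) : ℝ) * (Nat.factorial (2*k) : ℝ) * 4^k)

noncomputable def gC (n k : ℕ) : ℝ :=
  (4*k : ℝ) * (Nat.factorial (n + 2*k) : ℝ) /
    ((Nat.factorial (n + 1 - 2*k) : ℝ) * (Nat.factorial (2*k) : ℝ) * 4^k)

lemma term_eq (n j : ℕ) (hj : j ≤ n/2) (x : ℝ) :
    (-4 : ℝ) ^ ((j : ℤ) - ((n / 2 : ℕ) : ℤ)) *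
      ((ascPochhammer ℝ n).eval (2 * ((n / 2 : ℕ) : ℝ) - 2 * (j : ℝ) + 1) /
        (Nat.factorial (n - (2 * (n / 2) - 2 * j)) : ℝ)) * x ^ j
    = (-1)^(n/2 - j) * cC n (n/2 - j) * x ^ j := by
  set k := n/2 - j with hk
  have h1 : ((j : ℤ) - ((n / 2 : ℕ) : ℤ)) = -(k : ℤ) := by omega
  have h2 : (2 * ((n / 2 : ℕ) : ℝ) - 2 * (j : ℝ) + 1) = ((2*k + 1 : ℕ) : ℝ) := by
    have : (k:ℝ) = (n/2 : ℕ) - (j:ℝ) := by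
      rw [hk]; push_cast [Nat.cast_sub hj]; ring
    push_cast [this]; ring
  have h3 : n - (2 * (n / 2) - 2 * j) = n - 2*k := by omega
  have h4 : (ascPochhammer ℝ n).eval ((2*k + 1 : ℕ) : ℝ)
      = ((2*k+1).ascFactorial n : ℝ) := by
    rw [← ascPochhammer_eval_cast, ascPochhammer_nat_eq_ascFactorial]
  have h5 : ((2*k+1).ascFactorial n : ℝ)
      = (Nat.factorial (n + 2*k) : ℝ) / (Nat.factorial (2*k) : ℝ) := by
    rw [eq_div_iff (by positivity), ← Nat.cast_mul]
    norm_cast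
    rw [mul_comm, Nat.factorial_mul_ascFactorial]
    ring_nf
  have h6 : (-4 : ℝ) ^ (-(k:ℤ)) = (-1)^k * (4^k)⁻¹ := by
    rw [zpow_neg, zpow_natCast, neg_pow, mul_inv, ← inv_pow, inv_neg, inv_one]
  rw [h1, h2, h3, h4, h5, h6, cC]
  have : (Nat.factorial (n - 2*k) : ℝ) ≠ 0 := by positivity
  have : (Nat.factorial (2*k) : ℝ) ≠ 0 := by positivity
  have : ((4:ℝ)^k) ≠ 0 := by positivity
  field_simp
  try ring
  try tauto

lemma Fpoly_eq (n : ℕ) (x : ℝ) :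
    Fpoly n x = ∑ k ∈ Finset.range (n/2 + 1), (-1:ℝ)^k * cC n k * x ^ (n/2 - k) := by
  rw [Fpoly]
  rw [Finset.sum_congr rfl (fun j hj => term_eq n j (by
    rw [Finset.mem_range] at hj; omega) x)]
  rw [← Finset.sum_range_reflect]
  refine Finset.sum_congr rfl fun k hk => ?_
  rw [Finset.mem_range] at hk
  have h1 : n/2 + 1 - 1 - k = n/2 - k := by omega
  have h2 : n/2 - (n/2 - k) = k := by omega
  rw [h1, h2]

lemma cC_succ (n k : ℕ) (h : 2*k ≤ n) : cC (n+1) k = cC n k + gC n k := by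
  obtain ⟨d, rfl⟩ : ∃ d, n = 2*k + d := ⟨n - 2*k, by omega⟩
  rw [cC, cC, gC]
  rw [show 2*k + d + 1 + 2*k = (4*k + d) + 1 by ring, show 2*k + d + 2*k = 4*k + d by ring,
    show 2*k + d + 1 - 2*k = d + 1 by omega, show 2*k + d - 2*k = d by omega,
    Nat.factorial_succ, Nat.factorial_succ]
  have e1 : (Nat.factorial (4*k + d) : ℝ) ≠ 0 := by positivity
  have e2 : (Nat.factorial d : ℝ) ≠ 0 := by positivity
  have e3 : (Nat.factorial (2*k) : ℝ) ≠ 0 := by positivity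
  have e4 : ((4:ℝ)^k) ≠ 0 := by positivity
  field_simp
  push_cast
  ring

lemma gC_edge (m : ℕ) : cC (2*m + 2) (m+1) = gC (2*m+1) (m+1) := by
  rw [cC, gC]
  rw [show 2*m + 2 + 2*(m+1) = (4*m + 3) + 1 by ring, show 2*m+1 + 2*(m+1) = 4*m + 3 by ring,
    show 2*m + 2 - 2*(m+1) = 0 by omega,
    Nat.factorial_succ]
  push_cast
  ring

lemma Fpoly_succ_eq (n : ℕ) (lam : ℝ) (hroot : Fpoly n lam = 0) :
    Fpoly (n+1) lam
      = ∑ k ∈ Finset.range ((n+1)/2 + 1), (-1:ℝ)^k * gC n k * lam ^ ((n+1)/2 - k) := by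
  rw [Fpoly_eq] at hroot ⊢
  rcases Nat.even_or_odd n with ⟨m, hm⟩ | ⟨m, hm⟩
  · -- n even, n = 2m
    have h1 : (n+1)/2 = n/2 := by omega
    rw [h1]
    have h2 : ∀ k ∈ Finset.range (n/2 + 1),
        (-1:ℝ)^k * cC (n+1) k * lam ^ (n/2 - k)
          = (-1:ℝ)^k * cC n k * lam ^ (n/2 - k) + (-1:ℝ)^k * gC n k * lam ^ (n/2 - k) := by
      intro k hk
      rw [Finset.mem_range] at hk
      rw [cC_succ n k (by omega)]
      ring
    rw [Finset.sum_congr rfl h2, Finset.sum_add_distrib, hroot, zero_add]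
  · -- n odd, n = 2m + 1
    have h1 : (n+1)/2 = m + 1 := by omega
    have h2 : n/2 = m := by omega
    rw [h2] at hroot
    rw [h1]
    rw [Finset.sum_range_succ, Finset.sum_range_succ (fun k => (-1:ℝ)^k * gC n k * lam ^ (m+1-k))]
    have h3 : ∀ k ∈ Finset.range (m + 1),
        (-1:ℝ)^k * cC (n+1) k * lam ^ (m+1 - k)
          = lam * ((-1:ℝ)^k * cC n k * lam ^ (m - k)) + (-1:ℝ)^k * gC n k * lam ^ (m+1 - k) := by
      intro k hk
      rw [Finset.mem_range] at hk
      rw [cC_succ n k (by omega), show m + 1 - k = (m - k) + 1 by omega, pow_succ]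
      ring
    rw [Finset.sum_congr rfl h3, Finset.sum_add_distrib, ← Finset.mul_sum, hroot, mul_zero,
      zero_add]
    have h4 : cC (n+1) (m+1) = gC n (m+1) := by
      rw [show n + 1 = 2*m + 2 by omega, show n = 2*m+1 by omega]
      exact gC_edge m
    rw [h4]

lemma key_nat (j e : ℕ) (hj : 1 ≤ j) :
    4*(j+1)*(4*j+e+2)*(4*j+e+3)*(e+1)*(e+2) ≤
      j*(2*j+1)*(2*j+2)*((2*j+e)*(2*j+e+1)*(2*j+e+2)*(2*j+e+3)) := by
  rcases Nat.lt_or_ge j 2 with h | h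
  · interval_cases j
    nlinarith [sq_nonneg e, e.zero_le]
  · have step1 : 4*(j+1)*(4*j+e+2)*(4*j+e+3)*(e+1)*(e+2) ≤
        16*(j+1)*((2*j+e)*(2*j+e+1)*(2*j+e+2)*(2*j+e+3)) := by
      have h1 : (4*j+e+2)*(4*j+e+3)*((e+1)*(e+2)) ≤
          (2*(2*j+e+2))*(2*(2*j+e+3))*((2*j+e)*(2*j+e+1)) :=
        Nat.mul_le_mul (Nat.mul_le_mul (by omega) (by omega))
          (Nat.mul_le_mul (by omega) (by omega))
      calc 4*(j+1)*(4*j+e+2)*(4*j+e+3)*(e+1)*(e+2)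
          = 4*(j+1)*((4*j+e+2)*(4*j+e+3)*((e+1)*(e+2))) := by ring
        _ ≤ 4*(j+1)*((2*(2*j+e+2))*(2*(2*j+e+3))*((2*j+e)*(2*j+e+1))) :=
            Nat.mul_le_mul_left _ h1
        _ = 16*(j+1)*((2*j+e)*(2*j+e+1)*(2*j+e+2)*(2*j+e+3)) := by ring
    have step2 : 16*(j+1) ≤ j*(2*j+1)*(2*j+2) := by
      obtain ⟨i, rfl⟩ : ∃ i, j = i + 2 := ⟨j - 2, by omega⟩
      nlinarith [sq_nonneg i, i.zero_le]
    exact le_trans step1 (Nat.mul_le_mul_right _ step2)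

lemma gC_ratio (n j : ℕ) (hj : 1 ≤ j) (hjn : 2*(j+1) ≤ n+1) :
    gC n (j+1) ≤ ((n:ℝ)*((n:ℝ)-1)*((n:ℝ)+1)*((n:ℝ)+2)/16) * gC n j := by
  obtain ⟨e, rfl⟩ : ∃ e, n = 2*j + e + 1 := ⟨n - 2*j - 1, by omega⟩
  rw [gC, gC]
  rw [show 2*j+e+1 + 2*(j+1) = ((4*j+e+2)) + 1 by ring,
    show 2*j+e+1 + 2*j = (4*j+e) + 1 by ring,
    show 2*j+e+1+1 - 2*(j+1) = e by omega,
    show 2*j+e+1+1 - 2*j = (e+1) + 1 by omega,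
    show 2*(j+1) = (2*j+1) + 1 by ring]
  simp only [Nat.factorial_succ, pow_succ]
  have e1 : (0:ℝ) < (Nat.factorial (4*j+e) : ℝ) := by positivity
  have e2 : (0:ℝ) < (Nat.factorial e : ℝ) := by positivity
  have e3 : (0:ℝ) < (Nat.factorial (2*j) : ℝ) := by positivity
  have e4 : (0:ℝ) < ((4:ℝ)^j) := by positivity
  have key : ((4*(j+1)*(4*j+e+2)*(4*j+e+3)*(e+1)*(e+2) : ℕ) : ℝ) ≤
      ((j*(2*j+1)*(2*j+2)*((2*j+e)*(2*j+e+1)*(2*j+e+2)*(2*j+e+3)) : ℕ) : ℝ) :=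
    Nat.cast_le.mpr (key_nat j e hj)
  push_cast at key
  have hW : (0:ℝ) ≤ (Nat.factorial (4*j+e) : ℝ) * (Nat.factorial e : ℝ)
      * (Nat.factorial (2*j) : ℝ) * (4:ℝ)^j := by positivity
  rw [← mul_div_assoc, div_le_div_iff₀ (by positivity) (by positivity)]
  push_cast
  nlinarith [mul_le_mul_of_nonneg_right key hW, e1, e2, e3, e4,
    mul_pos (mul_pos (mul_pos e1 e2) e3) e4]

lemma alt_nonneg : ∀ (M : ℕ) (b : ℕ → ℝ), (∀ k, k < M → 0 ≤ b k) →
    (∀ k, k + 1 < M → b (k+1) ≤ b k) → 0 ≤ ∑ k ∈ Finset.range M, (-1:ℝ)^k * b k := by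
  intro M
  induction M using Nat.strong_induction_on with
  | _ M ih =>
    match M with
    | 0 => intro b _ _; simp
    | 1 => intro b hb _; simpa using hb 0 (by norm_num)
    | (M+2) =>
      intro b hb hmono
      rw [Finset.sum_range_succ', Finset.sum_range_succ']
      have h1 : 0 ≤ ∑ i ∈ Finset.range M, (-1:ℝ)^i * b (i+2) :=
        ih M (by omega) (fun k => b (k+2)) (fun k hk => hb (k+2) (by omega))
          (fun k hk => hmono (k+2) (by omega))
      have h2 : ∑ i ∈ Finset.range M, (-1:ℝ)^(i+1+1) * b (i+1+1)
          = ∑ i ∈ Finset.range M, (-1:ℝ)^i * b (i+2) := by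
        refine Finset.sum_congr rfl fun i _ => ?_
        ring_nf
      rw [h2]
      have h3 := hmono 0 (by omega)
      have h4 := hb 0 (by omega)
      simp only [pow_succ, pow_zero]
      nlinarith [h1]

lemma alt_le_first (M : ℕ) (b : ℕ → ℝ) (hb : ∀ k, k < M → 0 ≤ b k) (h0 : 0 ≤ b 0)
    (hmono : ∀ k, k + 1 < M → b (k+1) ≤ b k) :
    ∑ k ∈ Finset.range M, (-1:ℝ)^k * b k ≤ b 0 := by
  match M with
  | 0 => simpa using h0
  | M+1 =>
    rw [Finset.sum_range_succ']
    have h1 : 0 ≤ ∑ i ∈ Finset.range M, (-1:ℝ)^i * b (i+1) :=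
      alt_nonneg M (fun k => b (k+1)) (fun k hk => hb (k+1) (by omega))
        (fun k hk => hmono (k+1) (by omega))
    have h2 : ∑ i ∈ Finset.range M, (-1:ℝ)^(i+1) * b (i+1)
        = -∑ i ∈ Finset.range M, (-1:ℝ)^i * b (i+1) := by
      rw [← Finset.sum_neg_distrib]
      refine Finset.sum_congr rfl fun i _ => ?_
      ring
    rw [h2]
    simp only [pow_zero]
    linarith

lemma alt_pos (M : ℕ) (b : ℕ → ℝ) (hb : ∀ k, 0 ≤ b k) (h0 : 0 < b 0)
    (hmono : ∀ k, k + 1 < M → b (k+1) ≤ b k) (h1 : 2 ≤ M → b 1 < b 0) :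
    ∀ _ : 1 ≤ M, 0 < ∑ k ∈ Finset.range M, (-1:ℝ)^k * b k := by
  intro hM
  match M with
  | 1 => simpa using h0
  | (M+2) =>
    rw [Finset.sum_range_succ']
    have hT : ∑ i ∈ Finset.range (M+1), (-1:ℝ)^i * b (i+1) ≤ b 1 :=
      alt_le_first (M+1) (fun k => b (k+1)) (fun k _ => hb (k+1)) (hb 1)
        (fun k hk => hmono (k+1) (by omega))
    have h2 : ∑ i ∈ Finset.range (M+1), (-1:ℝ)^(i+1) * b (i+1)
        = -∑ i ∈ Finset.range (M+1), (-1:ℝ)^i * b (i+1) := by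
      rw [← Finset.sum_neg_distrib]
      exact Finset.sum_congr rfl fun i _ => by ring
    rw [h2]
    have h3 := h1 (by omega)
    simp only [pow_zero]
    linarith

/-- If `n ≥ 2` and `λ` is a root of `F_n` with `λ > (1/2) f_1(n)`, where
`f_1(n) = n(n−1)(n+1)(n+2)/8`, then `F_{n+1}(λ) < 0`. -/
theorem Fpoly_succ_neg (n : ℕ) (hn : 2 ≤ n) (lam : ℝ) (hroot : Fpoly n lam = 0)
    (hgt : lam > (1 / 2) * ((n : ℝ) * ((n : ℝ) - 1) * ((n : ℝ) + 1) * ((n : ℝ) + 2) / 8)) :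
    Fpoly (n + 1) lam < 0 := by
  set M := (n+1)/2 with hMdef
  set φ : ℝ := (n : ℝ) * ((n : ℝ) - 1) * ((n : ℝ) + 1) * ((n : ℝ) + 2) / 16 with hφdef
  have hn2 : (2:ℝ) ≤ (n:ℝ) := by exact_mod_cast hn
  have hφpos : 0 < φ := by
    rw [hφdef]
    have p1 : (0:ℝ) < (n:ℝ) := by linarith
    have p2 : (0:ℝ) < (n:ℝ) - 1 := by linarith
    have p3 : (0:ℝ) < (n:ℝ) + 1 := by linarith
    have p4 : (0:ℝ) < (n:ℝ) + 2 := by linarith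
    positivity
  have hφlam : φ < lam := by
    rw [hφdef]; nlinarith [hgt]
  have hlam : 0 < lam := lt_trans hφpos hφlam
  have hM1 : 1 ≤ M := by omega
  set b : ℕ → ℝ := fun k => gC n (k+1) * lam ^ (M - 1 - k) with hbdef
  have hgCnn : ∀ k, 0 ≤ gC n k := by
    intro k; rw [gC]; positivity
  have hgCpos : ∀ j, 1 ≤ j → 0 < gC n j := by
    intro j hj
    rw [gC]
    apply div_pos
    · apply mul_pos
      · have : (0:ℝ) < (j:ℝ) := by exact_mod_cast hj
        linarith
      · positivity
    · positivity
  have hbnn : ∀ k, 0 ≤ b k := fun k => mul_nonneg (hgCnn (k+1)) (by positivity)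
  have hbpos0 : 0 < b 0 := mul_pos (hgCpos 1 le_rfl) (by positivity)
  have hstrict : ∀ k, k + 1 < M → b (k+1) < b k := by
    intro k hk
    have hratio := gC_ratio n (k+1) (by omega) (by omega)
    have hlt : gC n (k+1+1) < lam * gC n (k+1) := by
      calc gC n (k+1+1) ≤ φ * gC n (k+1) := hratio
        _ < lam * gC n (k+1) := by
            exact mul_lt_mul_of_pos_right hφlam (hgCpos (k+1) (by omega))
    have hidx1 : M - 1 - (k+1) = M - 2 - k := by omega
    have hidx2 : M - 1 - k = (M - 2 - k) + 1 := by omega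
    rw [hbdef]
    simp only
    rw [hidx1, hidx2, pow_succ]
    calc gC n (k+1+1) * lam ^ (M-2-k)
        < (lam * gC n (k+1)) * lam ^ (M-2-k) :=
          mul_lt_mul_of_pos_right hlt (by positivity)
      _ = gC n (k+1) * (lam ^ (M-2-k) * lam) := by ring
  have hpos : 0 < ∑ k ∈ Finset.range M, (-1:ℝ)^k * b k :=
    alt_pos M b hbnn hbpos0 (fun k hk => le_of_lt (hstrict k hk))
      (fun h2 => hstrict 0 (by omega)) hM1
  rw [Fpoly_succ_eq n lam hroot]
  rw [← hMdef, Finset.sum_range_succ']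
  have hg0 : gC n 0 = 0 := by simp [gC]
  have h2 : ∑ i ∈ Finset.range M, (-1:ℝ)^(i+1) * gC n (i+1) * lam ^ (M - (i+1))
      = -∑ i ∈ Finset.range M, (-1:ℝ)^i * b i := by
    rw [← Finset.sum_neg_distrib]
    refine Finset.sum_congr rfl fun i _ => ?_
    rw [hbdef]
    simp only
    rw [show M - (i+1) = M - 1 - i by omega]
    ring
  rw [h2, hg0]
  simp only [pow_zero]
  linarith
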